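/- arXiv:1607.04626 — 5 statements merged into one kernel-verified Lean document; each statement's English description precedes it below -/
import Mathlib

section
/- Fix p > 2 and let h be analytic on the unit disk D with h'(z) = (1−z)^{−p} (principal branch). Let f = h + conj(h) = 2·Re(h) and let id(z) = z. Then J_f ≡ 0 on D, so β(f) = 0 and f ∈ B_H, and β(id) < ∞ so id ∈ B_H; however f + id ∉ B_H: indeed J_{f+id}(z) = 1 + 2·Re(h'(z)) and sup_{x∈(0,1)} (1−x²)²·|J_{f+id}(x)| = (1+x)²·(2+(1−x)^p)/(1−x)^{p−2} → ∞ as x → 1⁻. In particular, B_H is not closed under addition and hence is not a linear space. -/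
open Metric Set Filter

/-- Jacobian of the harmonic mapping `f = h + conj g`. -/
noncomputable def jacobian (h g : ℂ → ℂ) (z : ℂ) : ℝ :=
  ‖deriv h z‖ ^ 2 - ‖deriv g z‖ ^ 2

/-- The Bloch-type seminorm `β(f) = sup_{z ∈ 𝔻} (1 - |z|²) √|J_f(z)|`. -/
noncomputable def betaH (h g : ℂ → ℂ) : ℝ :=
  sSup ((fun z => (1 - ‖z‖ ^ 2) * Real.sqrt |jacobian h g z|) '' Metric.ball 0 1)

/-- Membership in the Bloch-type class `B_H`, i.e. `β(f) < ∞`. -/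
def InBH (h g : ℂ → ℂ) : Prop :=
  BddAbove ((fun z => (1 - ‖z‖ ^ 2) * Real.sqrt |jacobian h g z|) '' Metric.ball 0 1)

/-- **`B_H` is not a linear space.**  For `p > 2` and `h` analytic on the disk with
`h'(z) = (1-z)^{-p}`, the mapping `f = h + conj h = 2 Re h` has `J_f ≡ 0`, hence `β(f) = 0`
and `f ∈ B_H`; the identity (with decomposition `id + conj 0`) lies in `B_H`; but
`f + id = (h + id) + conj h` has `J_{f+id} = 1 + 2 Re h'`, satisfies
`(1-x²)² |J_{f+id}(x)| = (1+x)²(2+(1-x)^p)/(1-x)^{p-2} → ∞` as `x → 1⁻`, so `f + id ∉ B_H`. -/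
theorem BH_not_linear_space (p : ℝ) (hp : 2 < p) (h : ℂ → ℂ)
    (hh : DifferentiableOn ℂ h (Metric.ball 0 1))
    (hd : ∀ z ∈ Metric.ball (0 : ℂ) 1, deriv h z = (1 - z) ^ (-(p : ℂ))) :
    (∀ z ∈ Metric.ball (0 : ℂ) 1, jacobian h h z = 0)
    ∧ betaH h h = 0
    ∧ InBH h h
    ∧ InBH (fun z => z) (fun _ => 0)
    ∧ (∀ z ∈ Metric.ball (0 : ℂ) 1,
        jacobian (fun w => h w + w) h z = 1 + 2 * (deriv h z).re)
    ∧ (∀ x ∈ Set.Ioo (0 : ℝ) 1,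
        (1 - x ^ 2) ^ 2 * |jacobian (fun w => h w + w) h (x : ℂ)|
          = (1 + x) ^ 2 * (2 + (1 - x) ^ p) / (1 - x) ^ (p - 2))
    ∧ Filter.Tendsto (fun x : ℝ => (1 - x ^ 2) ^ 2 * |jacobian (fun w => h w + w) h (x : ℂ)|)
        (nhdsWithin 1 (Set.Ioo 0 1)) Filter.atTop
    ∧ ¬ InBH (fun w => h w + w) h := by
  have hball : ∀ x : ℝ, x ∈ Set.Ioo (0:ℝ) 1 → (x:ℂ) ∈ Metric.ball (0:ℂ) 1 := by
    intro x hx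
    simp only [Metric.mem_ball, dist_zero_right, Complex.norm_real, Real.norm_eq_abs]
    rw [abs_lt]
    exact ⟨by linarith [hx.1], hx.2⟩
  -- Part 1
  have part1 : ∀ z ∈ Metric.ball (0 : ℂ) 1, jacobian h h z = 0 := fun z _ => sub_self _
  -- Part 2
  have himg : ((fun z => (1 - ‖z‖ ^ 2) * Real.sqrt |jacobian h h z|) ''
      Metric.ball 0 1) = {0} := by
    ext y
    constructor
    · rintro ⟨z, _, rfl⟩
      simp [jacobian, sub_self]
    · rintro rfl
      exact ⟨0, by simp, by simp [jacobian, sub_self]⟩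
  have part2 : betaH h h = 0 := by rw [betaH, himg, csSup_singleton]
  have part3 : InBH h h := by rw [InBH, himg]; exact bddAbove_singleton
  -- Part 4
  have part4 : InBH (fun z => z) (fun _ => 0) := by
    refine ⟨1, ?_⟩
    rintro y ⟨z, hz, rfl⟩
    have hj : jacobian (fun z => z) (fun _ => 0) z = 1 := by
      simp [jacobian, deriv_id'']
    simp only [hj, abs_one, Real.sqrt_one, mul_one]
    have := norm_nonneg z
    nlinarith
  -- Part 5
  have part5 : ∀ z ∈ Metric.ball (0 : ℂ) 1,
      jacobian (fun w => h w + w) h z = 1 + 2 * (deriv h z).re := by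
    intro z hz
    have hdz : DifferentiableAt ℂ h z := hh.differentiableAt (isOpen_ball.mem_nhds hz)
    have hderiv : deriv (fun w => h w + w) z = deriv h z + 1 := by
      rw [deriv_fun_add hdz differentiableAt_fun_id]
      simp
    unfold jacobian
    rw [hderiv, Complex.sq_norm, Complex.sq_norm, Complex.normSq_add]
    simp [Complex.normSq_apply]
    ring
  -- jacobian value on the real segment
  have jac6 : ∀ x ∈ Set.Ioo (0:ℝ) 1,
      jacobian (fun w => h w + w) h (x:ℂ) = 1 + 2 * (1-x) ^ (-p) := by
    intro x hx
    have hxb := hball x hx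
    have ht : (0:ℝ) ≤ 1 - x := by linarith [hx.2]
    have hc : ((1:ℂ) - (x:ℂ)) ^ (-(p:ℂ)) = (((1-x) ^ (-p) : ℝ) : ℂ) := by
      rw [Complex.ofReal_cpow ht]
      push_cast
      ring_nf
    rw [part5 _ hxb, hd _ hxb, hc, Complex.ofReal_re]
  -- Part 6
  have part6 : ∀ x ∈ Set.Ioo (0 : ℝ) 1,
      (1 - x ^ 2) ^ 2 * |jacobian (fun w => h w + w) h (x : ℂ)|
        = (1 + x) ^ 2 * (2 + (1 - x) ^ p) / (1 - x) ^ (p - 2) := by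
    intro x hx
    obtain ⟨hx0, hx1⟩ := hx
    set t := 1 - x with htdef
    have ht : 0 < t := by simp [htdef]; linarith
    have habs : |jacobian (fun w => h w + w) h (x:ℂ)| = 1 + 2 * t ^ (-p) := by
      rw [jac6 x ⟨hx0, hx1⟩, abs_of_pos]
      positivity
    rw [habs]
    have e1 : t ^ (2:ℝ) * t ^ (p-2) = t ^ p := by
      rw [← Real.rpow_add ht]; norm_num
    have e2 : t ^ (-p) * t ^ p = 1 := by
      rw [← Real.rpow_add ht]; norm_num
    have e0 : t ^ (2:ℝ) = t ^ (2:ℕ) := by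
      rw [show (2:ℝ) = ((2:ℕ):ℝ) by norm_num, Real.rpow_natCast]
    have hne : t ^ (p-2) ≠ 0 := (Real.rpow_pos_of_pos ht _).ne'
    have hx2 : 1 - x ^ 2 = (1+x) * t := by rw [htdef]; ring
    rw [hx2, eq_div_iff hne]
    linear_combination (1+x)^2 * (-(1 + 2*t^(-p)) * t^(p-2) * e0
      + (1 + 2*t^(-p)) * e1 + 2 * e2)
  -- Part 7
  have part7 : Filter.Tendsto
      (fun x : ℝ => (1 - x ^ 2) ^ 2 * |jacobian (fun w => h w + w) h (x : ℂ)|)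
      (nhdsWithin 1 (Set.Ioo 0 1)) Filter.atTop := by
    have h1 : Tendsto (fun x:ℝ => (1-x)⁻¹) (nhdsWithin 1 (Set.Ioo 0 1)) atTop := by
      apply tendsto_inv_nhdsGT_zero.comp
      apply tendsto_nhdsWithin_of_tendsto_nhds_of_eventually_within
      · have : Tendsto (fun x:ℝ => 1 - x) (nhds 1) (nhds (1-1)) :=
          (continuous_const.sub continuous_id).tendsto 1
        simpa using this.mono_left nhdsWithin_le_nhds
      · filter_upwards [self_mem_nhdsWithin] with x hx
        exact sub_pos.mpr hx.2
    have h2 : Tendsto (fun x:ℝ => 2 * ((1-x)⁻¹)^(p-2)) (nhdsWithin 1 (Set.Ioo (0:ℝ) 1)) atTop :=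
      ((tendsto_rpow_atTop (by linarith : 0 < p - 2)).comp h1).const_mul_atTop (by norm_num)
    have h3 : Tendsto (fun x:ℝ => (1 + x) ^ 2 * (2 + (1 - x) ^ p) / (1 - x) ^ (p - 2))
        (nhdsWithin 1 (Set.Ioo (0:ℝ) 1)) atTop := by
      apply tendsto_atTop_mono' _ _ h2
      filter_upwards [self_mem_nhdsWithin] with x hx
      have ht : 0 < 1 - x := sub_pos.2 hx.2
      have hdpos : 0 < (1-x)^(p-2) := Real.rpow_pos_of_pos ht _
      rw [Real.inv_rpow ht.le, mul_comm (2:ℝ), inv_mul_eq_div, div_le_div_iff₀ hdpos hdpos]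
      have hnn : 0 ≤ (1-x)^p := Real.rpow_nonneg ht.le p
      have h2N : (2:ℝ) ≤ (1 + x) ^ 2 * (2 + (1 - x) ^ p) := by nlinarith [hx.1]
      exact mul_le_mul_of_nonneg_right h2N hdpos.le
    apply h3.congr'
    filter_upwards [self_mem_nhdsWithin] with x hx
    exact (part6 x hx).symm
  -- Part 8
  have part8 : ¬ InBH (fun w => h w + w) h := by
    rintro ⟨M, hM⟩
    have key : ∀ x ∈ Set.Ioo (0:ℝ) 1,
        (1 - x ^ 2) ^ 2 * |jacobian (fun w => h w + w) h (x : ℂ)| ≤ M ^ 2 := by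
      intro x hx
      have hmem := hM ⟨(x:ℂ), hball x hx, rfl⟩
      have habs : ‖(x:ℂ)‖ ^ 2 = x ^ 2 := by
        rw [Complex.norm_real, Real.norm_eq_abs, sq_abs]
      simp only [habs] at hmem
      have hF0 : 0 ≤ (1 - x ^ 2) * Real.sqrt |jacobian (fun w => h w + w) h (x:ℂ)| := by
        have : 0 ≤ 1 - x ^ 2 := by nlinarith [hx.1, hx.2]
        positivity
      have hsq : ((1 - x ^ 2) * Real.sqrt |jacobian (fun w => h w + w) h (x:ℂ)|) ^ 2
          = (1 - x ^ 2) ^ 2 * |jacobian (fun w => h w + w) h (x:ℂ)| := by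
        rw [mul_pow, Real.sq_sqrt (abs_nonneg _)]
      calc (1 - x ^ 2) ^ 2 * |jacobian (fun w => h w + w) h (x:ℂ)|
          = ((1 - x ^ 2) * Real.sqrt |jacobian (fun w => h w + w) h (x:ℂ)|) ^ 2 := hsq.symm
        _ ≤ M ^ 2 := by apply pow_le_pow_left₀ hF0 hmem
    haveI : (nhdsWithin (1:ℝ) (Set.Ioo 0 1)).NeBot := by
      apply mem_closure_iff_nhdsWithin_neBot.mp
      rw [closure_Ioo (by norm_num : (0:ℝ) ≠ 1)]
      exact ⟨by norm_num, le_refl 1⟩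
    have hev := (part7.eventually_gt_atTop (M ^ 2)).and self_mem_nhdsWithin
    obtain ⟨x, hgt, hmem⟩ := hev.exists
    exact absurd (key x hmem) (not_le.mpr hgt)
  exact ⟨part1, part2, part3, part4, part5, part6, part7, part8⟩
end

section
/- Let h be analytic on the unit disk D with h(z) = 2·(1−z)^{−1/2} (principal branch, so h'(z) = (1−z)^{−3/2}), and let g be analytic on D with g(0) = 0 and g'(z) = z·h'(z). Then the harmonic mapping f = h + conj(g) satisfies (1−|z|²)·√(J_f(z)) = ((1−|z|²)/|1−z|)^{3/2} ≤ 2√2 for all z ∈ D, so f ∈ B_H; on the other hand sup_{z∈D} (1−|z|²)·|h'(z)| = ∞, i.e. h is not an analytic Bloch function. Hence B_H strictly contains the harmonic Bloch space of mappings h + conj(g) with both h and g analytic Bloch functions. -/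
open Metric Set Filter

/-- **`B_H` strictly contains Colonna's harmonic Bloch space.**  With
`h(z) = 2(1-z)^{-1/2}` (so `h'(z) = (1-z)^{-3/2}`), `g(0) = 0` and `g' = z·h'` (dilatation
`ω(z) = z`), the harmonic mapping `f = h + conj g` satisfies
`(1-|z|²)√(J_f(z)) = ((1-|z|²)/|1-z|)^{3/2} ≤ 2√2`, so `f ∈ B_H`; yet
`sup_{z ∈ 𝔻} (1-|z|²)|h'(z)| = ∞`, i.e. `h` is not an analytic Bloch function. -/
theorem BH_strictly_contains_harmonic_Bloch (h g : ℂ → ℂ)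
    (hh : DifferentiableOn ℂ h (Metric.ball 0 1))
    (hg : DifferentiableOn ℂ g (Metric.ball 0 1))
    (hval : ∀ z ∈ Metric.ball (0 : ℂ) 1, h z = 2 * (1 - z) ^ (-(1 / 2) : ℂ))
    (hd : ∀ z ∈ Metric.ball (0 : ℂ) 1, deriv h z = (1 - z) ^ (-(3 / 2) : ℂ))
    (hg0 : g 0 = 0)
    (hgd : ∀ z ∈ Metric.ball (0 : ℂ) 1, deriv g z = z * deriv h z) :
    (∀ z ∈ Metric.ball (0 : ℂ) 1,
        (1 - ‖z‖ ^ 2) * Real.sqrt (jacobian h g z)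
            = ((1 - ‖z‖ ^ 2) / ‖1 - z‖) ^ ((3 : ℝ) / 2)
        ∧ (1 - ‖z‖ ^ 2) * Real.sqrt (jacobian h g z) ≤ 2 * Real.sqrt 2)
    ∧ InBH h g
    ∧ ¬ BddAbove
        ((fun z => (1 - ‖z‖ ^ 2) * ‖deriv h z‖) '' Metric.ball 0 1) := by
  -- basic facts for z in the ball
  have habs : ∀ z ∈ Metric.ball (0 : ℂ) 1,
      ‖deriv h z‖ = ‖1 - z‖ ^ (-(3/2) : ℝ) := by
    intro z hz
    rw [hd z hz, show ((-(3/2) : ℂ)) = ((-(3/2) : ℝ) : ℂ) by norm_num,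
      Complex.norm_cpow_real]
  have key : ∀ z ∈ Metric.ball (0 : ℂ) 1,
      (1 - ‖z‖ ^ 2) * Real.sqrt (jacobian h g z)
        = ((1 - ‖z‖ ^ 2) / ‖1 - z‖) ^ ((3 : ℝ) / 2) := by
    intro z hz
    have hz1 : ‖z‖ < 1 := by simpa using hz
    have ha0 : (0:ℝ) ≤ ‖z‖ := norm_nonneg z
    have hpos : (0:ℝ) < 1 - ‖z‖ ^ 2 := by nlinarith
    have hzne : ‖1 - z‖ ≠ 0 := by
      intro hc
      have : (1:ℂ) - z = 0 := by simpa using (norm_eq_zero.mp hc)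
      have : z = 1 := by linear_combination -this
      simp [this] at hz1
    have hbpos : (0:ℝ) < ‖1 - z‖ :=
      lt_of_le_of_ne (norm_nonneg _) (Ne.symm hzne)
    have hjac : jacobian h g z
        = (1 - ‖z‖ ^ 2) * (‖1 - z‖ ^ (-(3/2) : ℝ)) ^ 2 := by
      unfold jacobian
      rw [hgd z hz, norm_mul, habs z hz]
      ring
    rw [hjac, Real.sqrt_mul hpos.le, Real.sqrt_sq (Real.rpow_nonneg hbpos.le _)]
    rw [Real.div_rpow hpos.le hbpos.le]
    rw [Real.sqrt_eq_rpow, Real.rpow_neg hbpos.le, div_eq_mul_inv,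
      show ((3:ℝ)/2) = 1 + 1/2 by norm_num, Real.rpow_add hpos, Real.rpow_add hbpos,
      Real.rpow_one, Real.rpow_one]
    ring
  have hjacnn : ∀ z ∈ Metric.ball (0 : ℂ) 1, 0 ≤ jacobian h g z := by
    intro z hz
    have hz1 : ‖z‖ < 1 := by simpa using hz
    have ha0 : (0:ℝ) ≤ ‖z‖ := norm_nonneg z
    have hpos : (0:ℝ) < 1 - ‖z‖ ^ 2 := by nlinarith
    unfold jacobian
    rw [hgd z hz, norm_mul]
    nlinarith [norm_nonneg (deriv h z), sq_nonneg (‖deriv h z‖)]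
  have hbound : ∀ z ∈ Metric.ball (0 : ℂ) 1,
      (1 - ‖z‖ ^ 2) * Real.sqrt (jacobian h g z) ≤ 2 * Real.sqrt 2 := by
    intro z hz
    rw [key z hz]
    have hz1 : ‖z‖ < 1 := by simpa using hz
    have ha0 : (0:ℝ) ≤ ‖z‖ := norm_nonneg z
    have hpos : (0:ℝ) < 1 - ‖z‖ ^ 2 := by nlinarith
    have hb1 : 1 - ‖z‖ ≤ ‖1 - z‖ := by
      have := norm_sub_norm_le (1:ℂ) z
      simpa using this
    have hbpos : (0:ℝ) < ‖1 - z‖ := by nlinarith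
    have hr2 : (1 - ‖z‖ ^ 2) / ‖1 - z‖ ≤ 2 := by
      rw [div_le_iff₀ hbpos]; nlinarith
    calc ((1 - ‖z‖ ^ 2) / ‖1 - z‖) ^ ((3:ℝ)/2)
        ≤ (2:ℝ) ^ ((3:ℝ)/2) :=
          Real.rpow_le_rpow (div_nonneg hpos.le hbpos.le) hr2 (by norm_num)
      _ = 2 * Real.sqrt 2 := by
          rw [show ((3:ℝ)/2) = 1 + 1/2 by norm_num, Real.rpow_add two_pos,
            Real.rpow_one, ← Real.sqrt_eq_rpow]
  refine ⟨fun z hz => ⟨key z hz, hbound z hz⟩, ⟨2 * Real.sqrt 2, ?_⟩, ?_⟩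
  · rintro y ⟨z, hz, rfl⟩
    simp only
    rw [abs_of_nonneg (hjacnn z hz)]
    exact hbound z hz
  · rintro ⟨M, hM⟩
    set c : ℝ := max M 1 with hc
    have hc1 : (1:ℝ) ≤ c := le_max_right _ _
    have hcM : M ≤ c := le_max_left _ _
    have hcpos : (0:ℝ) < c := by linarith
    set t : ℝ := 1 / (2 * c ^ 2) with ht
    have htpos : (0:ℝ) < t := by positivity
    have hthalf : t ≤ 1/2 := by
      rw [ht, div_le_div_iff₀ (by positivity) (by norm_num)]
      nlinarith
    set x : ℝ := 1 - t with hx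
    have hx0 : (0:ℝ) ≤ x := by simp only [hx]; linarith
    have hx1 : x < 1 := by simp only [hx]; linarith
    have hzmem : (x : ℂ) ∈ Metric.ball (0 : ℂ) 1 := by
      simp [Complex.norm_real, Real.norm_eq_abs, abs_of_nonneg hx0, hx1]
    have habsx : ‖(x : ℂ)‖ = x := by
      rw [Complex.norm_real, Real.norm_eq_abs, abs_of_nonneg hx0]
    have h1z : (1 : ℂ) - (x:ℂ) = ((t : ℝ) : ℂ) := by
      push_cast [hx]; ring
    have hvalx : (1 - ‖(x:ℂ)‖ ^ 2) * ‖deriv h (x:ℂ)‖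
        = (1 - x ^ 2) * t ^ (-(3/2) : ℝ) := by
      rw [habs _ hzmem, habsx, h1z, Complex.norm_real, Real.norm_eq_abs, abs_of_nonneg htpos.le]
    have hMle : (1 - ‖(x:ℂ)‖ ^ 2) * ‖deriv h (x:ℂ)‖ ≤ M :=
      hM ⟨(x:ℂ), hzmem, rfl⟩
    rw [hvalx] at hMle
    have hfact : 1 - x ^ 2 = t * (1 + x) := by rw [hx]; ring
    have hrw : (1 - x ^ 2) * t ^ (-(3/2) : ℝ) = (1 + x) * t ^ (-(1/2) : ℝ) := by
      rw [hfact]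
      have ha : t * t ^ (-(3/2) : ℝ) = t ^ (-(1/2) : ℝ) := by
        rw [show t * t ^ (-(3/2):ℝ) = t ^ (1:ℝ) * t ^ (-(3/2):ℝ) by rw [Real.rpow_one],
          ← Real.rpow_add htpos]
        norm_num
      calc t * (1 + x) * t ^ (-(3/2) : ℝ) = (1 + x) * (t * t ^ (-(3/2) : ℝ)) := by ring
        _ = (1 + x) * t ^ (-(1/2) : ℝ) := by rw [ha]
    have hsqrt2 : (1:ℝ) < Real.sqrt 2 := by
      rw [show (1:ℝ) = Real.sqrt 1 by simp]
      exact Real.sqrt_lt_sqrt (by norm_num) (by norm_num)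
    have htval : t ^ (-(1/2) : ℝ) = Real.sqrt 2 * c := by
      have hsq : t = ((Real.sqrt 2 * c)⁻¹) ^ 2 := by
        rw [ht]
        field_simp
        nlinarith [Real.sq_sqrt (by norm_num : (0:ℝ) ≤ 2), Real.sqrt_nonneg 2]
      rw [Real.rpow_neg htpos.le, ← Real.sqrt_eq_rpow, hsq,
        Real.sqrt_sq (by positivity), inv_inv]
    have hfin : M < (1 - x ^ 2) * t ^ (-(3/2) : ℝ) := by
      rw [hrw, htval]
      have h1 : c < Real.sqrt 2 * c := by nlinarith
      have h2 : Real.sqrt 2 * c ≤ (1 + x) * (Real.sqrt 2 * c) :=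
        le_mul_of_one_le_left (by positivity) (by linarith)
      linarith
    linarith
end

section
/- Fix t ∈ [0,1) and let g(z) = 2·(1−z)^{−1/2} + 2·(1−t)·(1−z)^{1/2} (principal branches) for z in the unit disk. Then for every ε > 0, (1−x)^{1/2−ε}·|g(x)| → ∞ as x → 1⁻ along the real axis. In particular, the growth estimate |g(z)| = O(1/√(1−|z|)) for the co-analytic part of sense-preserving Bloch-type mappings is sharp in order of magnitude. -/
open Metric Set Filter

/-- **Sharpness of the growth estimate for the co-analytic part.**  For `t ∈ [0,1)` and
`g(z) = 2(1-z)^{-1/2} + 2(1-t)(1-z)^{1/2}` on the unit disk, one has, for every `ε > 0`,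
`(1-x)^{1/2-ε}·|g(x)| → ∞` as `x → 1⁻` along the real axis. -/
theorem coanalytic_growth_sharp (t : ℝ) (ht : t ∈ Set.Ico (0 : ℝ) 1) (g : ℂ → ℂ)
    (hg : ∀ z ∈ Metric.ball (0 : ℂ) 1,
      g z = 2 * (1 - z) ^ (-(1 / 2) : ℂ) + 2 * (1 - (t : ℂ)) * (1 - z) ^ ((1 / 2) : ℂ)) :
    ∀ ε > (0 : ℝ),
      Filter.Tendsto (fun x : ℝ => (1 - x) ^ (1 / 2 - ε) * ‖g (x : ℂ)‖)
        (nhdsWithin 1 (Set.Ioo 0 1)) Filter.atTop := by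
  intro ε hε
  -- Step 1: 1 - x → 0⁺
  have h1 : Tendsto (fun x : ℝ => 1 - x) (nhdsWithin 1 (Ioo 0 1)) (nhdsWithin 0 (Ioi 0)) := by
    apply tendsto_nhdsWithin_of_tendsto_nhds_of_eventually_within
    · have : Tendsto (fun x : ℝ => 1 - x) (nhds 1) (nhds 0) := by
        have hc : Continuous (fun x : ℝ => 1 - x) := by continuity
        simpa using hc.tendsto (1 : ℝ)
      exact this.mono_left nhdsWithin_le_nhds
    · filter_upwards [self_mem_nhdsWithin] with x hx
      exact sub_pos.2 hx.2
  -- Step 2: (1-x)^ε → 0⁺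
  have h2 : Tendsto (fun x : ℝ => (1 - x) ^ ε) (nhdsWithin 1 (Ioo 0 1)) (nhdsWithin 0 (Ioi 0)) := by
    apply tendsto_nhdsWithin_of_tendsto_nhds_of_eventually_within
    · have hc : ContinuousAt (fun s : ℝ => s ^ ε) 0 :=
        Real.continuousAt_rpow_const 0 ε (Or.inr hε.le)
      have := hc.tendsto.comp (h1.mono_right nhdsWithin_le_nhds)
      simpa [Function.comp_def, Real.zero_rpow hε.ne'] using this
    · filter_upwards [self_mem_nhdsWithin] with x hx
      exact Real.rpow_pos_of_pos (sub_pos.2 hx.2) ε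
  -- Step 3: 2 * (1-x)^(-ε) → ∞
  have h3 : Tendsto (fun x : ℝ => 2 * (1 - x) ^ (-ε)) (nhdsWithin 1 (Ioo 0 1)) atTop := by
    have hinv : Tendsto (fun x : ℝ => ((1 - x) ^ ε)⁻¹) (nhdsWithin 1 (Ioo 0 1)) atTop :=
      tendsto_inv_nhdsGT_zero.comp h2
    have heq : (fun x : ℝ => ((1 - x) ^ ε)⁻¹) =ᶠ[nhdsWithin 1 (Ioo 0 1)]
        (fun x : ℝ => (1 - x) ^ (-ε)) := by
      filter_upwards [self_mem_nhdsWithin] with x hx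
      rw [Real.rpow_neg (sub_pos.2 hx.2).le]
    exact (Tendsto.congr' heq hinv).const_mul_atTop (by norm_num)
  -- Step 4: comparison
  apply tendsto_atTop_mono' _ _ h3
  filter_upwards [self_mem_nhdsWithin] with x hx
  have hs : (0 : ℝ) < 1 - x := sub_pos.2 hx.2
  have hx1 : (x : ℂ) ∈ Metric.ball (0 : ℂ) 1 := by
    simp [Complex.norm_real, abs_of_pos hx.1, hx.2]
  have hcast : (1 - (x : ℂ)) = ((1 - x : ℝ) : ℂ) := by push_cast; ring
  have hgx : g (x : ℂ) = (((2 * (1 - x) ^ (-(1/2) : ℝ) + 2 * (1 - t) * (1 - x) ^ ((1/2) : ℝ)) : ℝ) : ℂ) := by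
    rw [hg _ hx1, hcast]
    have e1 : (-(1 / 2) : ℂ) = ((-(1/2) : ℝ) : ℂ) := by norm_num
    have e2 : ((1 / 2) : ℂ) = (((1/2) : ℝ) : ℂ) := by norm_num
    rw [e1, e2, ← Complex.ofReal_cpow hs.le, ← Complex.ofReal_cpow hs.le]
    push_cast
    ring_nf
  have habs : ‖g (x : ℂ)‖ =
      2 * (1 - x) ^ (-(1/2) : ℝ) + 2 * (1 - t) * (1 - x) ^ ((1/2) : ℝ) := by
    rw [hgx, Complex.norm_real, Real.norm_eq_abs, abs_of_nonneg]
    have h1' : (0:ℝ) ≤ 2 * (1 - x) ^ (-(1/2) : ℝ) := by positivity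
    have h2' : (0:ℝ) ≤ 2 * (1 - t) * (1 - x) ^ ((1/2) : ℝ) := by
      have : (0:ℝ) ≤ 1 - t := by linarith [ht.2]
      positivity
    linarith
  rw [habs]
  have hkey : (1 - x) ^ (1 / 2 - ε) * (2 * (1 - x) ^ (-(1/2) : ℝ)) = 2 * (1 - x) ^ (-ε) := by
    rw [mul_comm ((1-x) ^ (1/2 - ε)) _, mul_assoc, ← Real.rpow_add hs]
    congr 1
    ring_nf
  have hmono : (1 - x) ^ (1 / 2 - ε) * (2 * (1 - x) ^ (-(1/2) : ℝ)) ≤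
      (1 - x) ^ (1 / 2 - ε) * (2 * (1 - x) ^ (-(1/2) : ℝ) + 2 * (1 - t) * (1 - x) ^ ((1/2) : ℝ)) := by
    apply mul_le_mul_of_nonneg_left _ (Real.rpow_nonneg hs.le _)
    have h1t : (0:ℝ) ≤ 1 - t := by linarith [ht.2]
    nlinarith [Real.rpow_nonneg hs.le ((1/2) : ℝ)]
  linarith [hkey ▸ hmono]
end

section
/- Let f = h + conj(g) be a sense-preserving harmonic mapping on the unit disk D with β(f) < ∞, let c₀ = g'(0)/h'(0), and write aₙ = h⁽ⁿ⁾(0)/n!, bₙ = g⁽ⁿ⁾(0)/n!. Then for every n ≥ 2 and every r ∈ (0,1): max{ |aₙ|, |bₙ| } ≤ β(f)·(1+|c₀|·r) / ( n·r^{n−1}·(1−r²)^{3/2}·√(1−|c₀|²) ). -/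
open Metric Set Filter

/-- Cauchy coefficient estimate. -/
lemma cauchy_coeff_bound {F : ℂ → ℂ} {r M : ℝ} (hr : 0 < r)
    (hF : DifferentiableOn ℂ F (closedBall 0 r))
    (hM : ∀ z : ℂ, ‖z‖ = r → ‖F z‖ ≤ M) (m : ℕ) :
    ‖iteratedDeriv m F 0‖ ≤ m.factorial * M / r ^ m := by
  obtain ⟨R, hR⟩ : ∃ R : NNReal, (R : ℝ) = r := ⟨⟨r, hr.le⟩, rfl⟩
  have hR0 : 0 < R := by rw [← NNReal.coe_lt_coe, hR]; exact hr
  have hps : HasFPowerSeriesOnBall F (cauchyPowerSeries F 0 R) 0 R := by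
    refine DifferentiableOn.hasFPowerSeriesOnBall ?_ hR0
    rwa [hR]
  have h1 : iteratedDeriv m F 0 = m.factorial • (cauchyPowerSeries F 0 R m (fun _ => (1:ℂ))) := by
    rw [iteratedDeriv_eq_iteratedFDeriv, ← hps.factorial_smul (1:ℂ) m]
  have hM0 : 0 ≤ M := le_trans (norm_nonneg _) (hM (r : ℂ) (by simp [hr.le]))
  have hcont : ContinuousOn (fun θ : ℝ => ‖F (circleMap 0 r θ)‖) (Set.uIcc 0 (2 * Real.pi)) := by
    apply ContinuousOn.norm
    exact hF.continuousOn.comp (continuous_circleMap 0 r).continuousOn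
      (fun θ _ => circleMap_mem_closedBall 0 hr.le θ)
  have habs : ∀ θ : ℝ, ‖circleMap 0 r θ‖ = r := by
    intro θ; rw [norm_circleMap_zero, abs_of_pos hr]
  have hint : (∫ θ : ℝ in (0)..2 * Real.pi, ‖F (circleMap 0 r θ)‖) ≤ 2 * Real.pi * M := by
    have := intervalIntegral.integral_mono_on (μ := MeasureTheory.volume) (a := (0:ℝ)) (b := 2 * Real.pi)
      (f := fun θ : ℝ => ‖F (circleMap 0 r θ)‖) (g := fun _ => M)
      Real.two_pi_pos.le (hcont.intervalIntegrable) (intervalIntegrable_const (c := M))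
      (fun θ _ => hM _ (habs θ))
    simpa using this
  have hnorm : ‖cauchyPowerSeries F 0 R m‖ ≤ M * r⁻¹ ^ m := by
    have := norm_cauchyPowerSeries_le F 0 r m
    rw [abs_of_pos hr] at this
    rw [show ((R : ℝ)) = r from hR]
    refine this.trans ?_
    apply mul_le_mul_of_nonneg_right _ (by positivity)
    calc (2 * Real.pi)⁻¹ * ∫ θ : ℝ in (0)..2 * Real.pi, ‖F (circleMap 0 r θ)‖
        ≤ (2 * Real.pi)⁻¹ * (2 * Real.pi * M) := by
          apply mul_le_mul_of_nonneg_left hint (by positivity)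
      _ = M := by field_simp
  have h2 : ‖cauchyPowerSeries F 0 R m (fun _ => (1:ℂ))‖ ≤ M * r⁻¹ ^ m := by
    refine le_trans ((cauchyPowerSeries F 0 R m).le_opNorm _) ?_
    simpa using hnorm
  rw [h1]
  have h3 : ‖m.factorial • (cauchyPowerSeries F 0 R m (fun _ => (1:ℂ)))‖
      = m.factorial * ‖cauchyPowerSeries F 0 R m (fun _ => (1:ℂ))‖ := by
    rw [nsmul_eq_mul]
    simp [map_mul]
  rw [h3, div_eq_mul_inv, ← inv_pow, mul_assoc]
  exact mul_le_mul_of_nonneg_left h2 (by positivity)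


lemma real_sp_ineq {a s x u : ℝ} (ha : 0 ≤ a) (ha1 : a < 1) (hs : 0 ≤ s) (hs1 : s < 1)
    (hx : 0 ≤ x) (hx1 : x < 1) (hu : u ≤ a * x)
    (key : x ^ 2 - 2 * u + a ^ 2 ≤ s ^ 2 * (1 - 2 * u + a ^ 2 * x ^ 2)) :
    x * (1 + a * s) ≤ a + s := by
  by_contra hcon
  push_neg at hcon
  have h1 : 0 < x * (1 + a * s) - (a + s) := by linarith
  have hax : a * x < 1 := by nlinarith
  have h2 : 0 < x * (1 - a * s) - (a - s) := by nlinarith [mul_nonneg hs (by linarith : (0:ℝ) ≤ 1 - a * x)]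
  have h3 : 0 < (x * (1 + a * s) - (a + s)) * (x * (1 - a * s) - (a - s)) := mul_pos h1 h2
  nlinarith [h3, key, mul_nonneg (by nlinarith : (0:ℝ) ≤ 1 - s ^ 2) (by linarith : (0:ℝ) ≤ a * x - u)]

lemma normSq_mobius (a w : ℂ) :
    Complex.normSq (1 - (starRingEnd ℂ) a * w) - Complex.normSq (a - w)
      = (1 - Complex.normSq a) * (1 - Complex.normSq w) := by
  simp only [Complex.normSq_apply, Complex.sub_re, Complex.sub_im, Complex.mul_re, Complex.mul_im,
    Complex.conj_re, Complex.conj_im, Complex.one_re, Complex.one_im]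
  ring

/-- Schwarz–Pick type estimate. -/
lemma schwarz_pick {ω : ℂ → ℂ} (hd : DifferentiableOn ℂ ω (ball 0 1))
    (hm : ∀ w ∈ ball (0:ℂ) 1, ‖ω w‖ < 1) {z : ℂ} (hz : z ∈ ball (0:ℂ) 1) :
    ‖ω z‖ * (1 + ‖ω 0‖ * ‖z‖)
      ≤ ‖ω 0‖ + ‖z‖ := by
  set c := ω 0 with hc_def
  have hc : ‖c‖ < 1 := hm 0 (by simp)
  have habs_mul : ∀ w ∈ ball (0:ℂ) 1, ‖(starRingEnd ℂ) c * ω w‖ < 1 := by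
    intro w hw
    rw [norm_mul, Complex.norm_conj]
    calc ‖c‖ * ‖ω w‖ ≤ 1 * ‖ω w‖ :=
          mul_le_mul_of_nonneg_right hc.le (norm_nonneg _)
      _ = ‖ω w‖ := one_mul _
      _ < 1 := hm w hw
  have hden : ∀ w ∈ ball (0:ℂ) 1, 1 - (starRingEnd ℂ) c * ω w ≠ 0 := by
    intro w hw hcontra
    have h1 : (starRingEnd ℂ) c * ω w = 1 := (sub_eq_zero.mp hcontra).symm
    have := habs_mul w hw
    rw [h1] at this; simp at this
  set ψ : ℂ → ℂ := fun w => (c - ω w) / (1 - (starRingEnd ℂ) c * ω w) with hψ_def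
  have hψd : DifferentiableOn ℂ ψ (ball 0 1) := by
    apply DifferentiableOn.div
    · exact (differentiableOn_const c).sub hd
    · exact (differentiableOn_const 1).sub ((differentiableOn_const _).mul hd)
    · exact hden
  have hlt : ∀ w ∈ ball (0:ℂ) 1,
      ‖c - ω w‖ < ‖1 - (starRingEnd ℂ) c * ω w‖ := by
    intro w hw
    have h1 : Complex.normSq (c - ω w) < Complex.normSq (1 - (starRingEnd ℂ) c * ω w) := by
      have h2 := normSq_mobius c (ω w)
      have h3 : 0 < 1 - Complex.normSq c := by
        have := Complex.sq_norm c; nlinarith [hc, norm_nonneg c]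
      have h4 : 0 < 1 - Complex.normSq (ω w) := by
        have := Complex.sq_norm (ω w); nlinarith [hm w hw, norm_nonneg (ω w)]
      nlinarith
    have := Real.sqrt_lt_sqrt (Complex.normSq_nonneg _) h1
    rwa [← Complex.norm_def, ← Complex.norm_def] at this
  have hmaps : MapsTo ψ (ball 0 1) (ball 0 1) := by
    intro w hw
    rw [mem_ball_zero_iff]
    have hdpos : 0 < ‖1 - (starRingEnd ℂ) c * ω w‖ :=
      norm_pos_iff.mpr (hden w hw)
    rw [hψ_def]
    simp only [norm_div]
    rw [div_lt_one hdpos]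
    exact hlt w hw
  have hψ0 : ψ 0 = 0 := by simp [hψ_def, hc_def]
  have hschwarz : ‖ψ z‖ ≤ ‖z‖ :=
    Complex.norm_le_norm_of_mapsTo_ball hψd (hmaps.mono_right ball_subset_closedBall) hψ0 (mem_ball_zero_iff.mp hz)
  -- Turn into the key inequality
  have hrec : ‖c - ω z‖ ≤ ‖z‖ * ‖1 - (starRingEnd ℂ) c * ω z‖ := by
    have h1 : ‖ψ z‖ * ‖1 - (starRingEnd ℂ) c * ω z‖
        = ‖c - ω z‖ := by
      rw [hψ_def]
      simp only [norm_div]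
      rw [div_mul_cancel₀]
      exact (norm_ne_zero_iff.mpr (hden z hz))
    rw [← h1]
    exact mul_le_mul_of_nonneg_right hschwarz (norm_nonneg _)
  set a := ‖c‖
  set s := ‖z‖
  set x := ‖ω z‖
  have key : x ^ 2 - 2 * ((starRingEnd ℂ) c * ω z).re + a ^ 2
      ≤ s ^ 2 * (1 - 2 * ((starRingEnd ℂ) c * ω z).re + a ^ 2 * x ^ 2) := by
    have h1 : ‖c - ω z‖ ^ 2
        ≤ (‖z‖ * ‖1 - (starRingEnd ℂ) c * ω z‖) ^ 2 := by
      apply sq_le_sq' _ hrec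
      have := norm_nonneg (c - ω z)
      nlinarith [mul_nonneg (norm_nonneg z) (norm_nonneg (1 - (starRingEnd ℂ) c * ω z))]
    rw [mul_pow] at h1
    rw [Complex.sq_norm, Complex.sq_norm, Complex.sq_norm] at h1
    have e1 : Complex.normSq (c - ω z)
        = x ^ 2 - 2 * ((starRingEnd ℂ) c * ω z).re + a ^ 2 := by
      have : x ^ 2 = Complex.normSq (ω z) := (Complex.sq_norm _)
      rw [this]
      have : a ^ 2 = Complex.normSq c := (Complex.sq_norm _)
      rw [this]
      simp only [Complex.normSq_apply, Complex.sub_re, Complex.sub_im, Complex.mul_re,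
        Complex.mul_im, Complex.conj_re, Complex.conj_im]
      ring
    have e2 : Complex.normSq (1 - (starRingEnd ℂ) c * ω z)
        = 1 - 2 * ((starRingEnd ℂ) c * ω z).re + a ^ 2 * x ^ 2 := by
      have h2 : x ^ 2 = Complex.normSq (ω z) := (Complex.sq_norm _)
      have h3 : a ^ 2 = Complex.normSq c := (Complex.sq_norm _)
      rw [h2, h3]
      simp only [Complex.normSq_apply, Complex.sub_re, Complex.sub_im, Complex.mul_re,
        Complex.mul_im, Complex.conj_re, Complex.conj_im, Complex.one_re, Complex.one_im]
      ring
    rw [e1, e2] at h1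
    convert h1 using 2 <;> rw [Complex.sq_norm] <;> rw [Complex.sq_norm]
  have hu : ((starRingEnd ℂ) c * ω z).re ≤ a * x := by
    calc ((starRingEnd ℂ) c * ω z).re ≤ ‖(starRingEnd ℂ) c * ω z‖ :=
          Complex.re_le_norm _
      _ = a * x := by rw [norm_mul, Complex.norm_conj]
  exact real_sp_ineq (norm_nonneg c) hc (norm_nonneg z)
    (mem_ball_zero_iff.mp hz) (norm_nonneg (ω z)) (hm z hz) hu key

set_option maxHeartbeats 1000000 in
/-- **Coefficient estimates in `B_H`, parametric form.**  If `f = h + conj g` is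
sense-preserving with `β(f) < ∞`, `c₀ = g'(0)/h'(0)`, `aₙ = h⁽ⁿ⁾(0)/n!`, `bₙ = g⁽ⁿ⁾(0)/n!`,
then for every `n ≥ 2` and every `r ∈ (0,1)`:
`max{|aₙ|, |bₙ|} ≤ β(f)·(1+|c₀|r)/(n·r^{n-1}·(1-r²)^{3/2}·√(1-|c₀|²))`. -/
theorem coefficient_estimates_BH_parametric (h g : ℂ → ℂ) (c₀ : ℂ)
    (hh : DifferentiableOn ℂ h (Metric.ball 0 1))
    (hg : DifferentiableOn ℂ g (Metric.ball 0 1))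
    (hsp : ∀ z ∈ Metric.ball (0 : ℂ) 1, ‖deriv g z‖ < ‖deriv h z‖)
    (hβ : InBH h g) (hc₀ : c₀ = deriv g 0 / deriv h 0) :
    ∀ n : ℕ, 2 ≤ n → ∀ r ∈ Set.Ioo (0 : ℝ) 1,
      max (‖iteratedDeriv n h 0 / (n.factorial : ℂ)‖)
          (‖iteratedDeriv n g 0 / (n.factorial : ℂ)‖)
        ≤ betaH h g * (1 + ‖c₀‖ * r)
            / ((n : ℝ) * r ^ (n - 1) * (1 - r ^ 2) ^ ((3 : ℝ) / 2)
                * Real.sqrt (1 - ‖c₀‖ ^ 2)) := by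
  intro n hn r hr
  obtain ⟨hr0, hr1⟩ := hr
  set F := deriv h with hF_def
  set G := deriv g with hG_def
  have hFne : ∀ z ∈ ball (0:ℂ) 1, F z ≠ 0 := by
    intro z hz h0
    have h2 := hsp z hz
    rw [h0] at h2
    simp only [norm_zero] at h2
    exact absurd h2 (not_lt.mpr (norm_nonneg _))
  have hFd : DifferentiableOn ℂ F (ball 0 1) :=
    ((hh.analyticOnNhd isOpen_ball).deriv).differentiableOn
  have hGd : DifferentiableOn ℂ G (ball 0 1) :=
    ((hg.analyticOnNhd isOpen_ball).deriv).differentiableOn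
  set ω : ℂ → ℂ := fun z => G z / F z with hω_def
  have hωd : DifferentiableOn ℂ ω (ball 0 1) := hGd.div hFd hFne
  have hωm : ∀ w ∈ ball (0:ℂ) 1, ‖ω w‖ < 1 := by
    intro w hw
    rw [hω_def]
    simp only [norm_div]
    rw [div_lt_one (norm_pos_iff.mpr (hFne w hw))]
    exact hsp w hw
  have hω0 : ω 0 = c₀ := by rw [hω_def, hc₀]
  set a := ‖c₀‖ with ha_def
  have ha0 : 0 ≤ a := norm_nonneg _
  have ha1 : a < 1 := by
    rw [ha_def, ← hω0]; exact hωm 0 (by simp)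
  have h1r2 : 0 < 1 - r ^ 2 := by nlinarith
  have h1a2 : 0 < 1 - a ^ 2 := by nlinarith
  set D : ℝ := (1 - r ^ 2) * Real.sqrt (1 - r ^ 2) * Real.sqrt (1 - a ^ 2) with hD_def
  have hDpos : 0 < D := by
    apply mul_pos (mul_pos h1r2 (Real.sqrt_pos.mpr h1r2)) (Real.sqrt_pos.mpr h1a2)
  set M : ℝ := betaH h g * (1 + a * r) / D with hM_def
  -- pointwise bound on the circle of radius r
  have hFM : ∀ z : ℂ, ‖z‖ = r → ‖F z‖ ≤ M := by
    intro z hzr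
    have hzball : z ∈ ball (0:ℂ) 1 := by
      rw [mem_ball_zero_iff, hzr]; exact hr1
    set x := ‖ω z‖ with hx_def
    have hx0 : 0 ≤ x := norm_nonneg _
    have hsp' := schwarz_pick hωd hωm hzball
    rw [hω0, hzr, ← ha_def, ← hx_def] at hsp'
    -- (1-r²)(1-a²) ≤ (1+ar)²(1-x²)
    have hkey : (1 - r ^ 2) * (1 - a ^ 2) ≤ (1 + a * r) ^ 2 * (1 - x ^ 2) := by
      nlinarith [hsp', mul_nonneg hx0 (by nlinarith : (0:ℝ) ≤ 1 + a * r), hx0, ha0, hr0.le]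
    have hx1 : x < 1 := hωm z hzball
    -- β bound at z
    have hβz : (1 - r ^ 2) * Real.sqrt |jacobian h g z| ≤ betaH h g := by
      have h2 := le_csSup hβ (mem_image_of_mem
        (fun z => (1 - ‖z‖ ^ 2) * Real.sqrt |jacobian h g z|) hzball)
      rw [hzr] at h2
      exact h2
    -- |jacobian| = |F z|² (1 - x²)
    have hGF : ‖G z‖ = x * ‖F z‖ := by
      rw [hx_def, hω_def]
      simp only [norm_div]
      rw [div_mul_cancel₀]
      exact norm_ne_zero_iff.mpr (hFne z hzball)
    have hjac : |jacobian h g z| = ‖F z‖ ^ 2 * (1 - x ^ 2) := by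
      rw [jacobian, ← hF_def, ← hG_def, hGF, abs_of_nonneg]
      · ring
      · nlinarith [sq_nonneg (‖F z‖),
          mul_nonneg (by nlinarith : (0:ℝ) ≤ 1 - x ^ 2) (sq_nonneg (‖F z‖))]
    have hsqrtjac : Real.sqrt |jacobian h g z|
        = ‖F z‖ * Real.sqrt (1 - x ^ 2) := by
      rw [hjac, Real.sqrt_mul (sq_nonneg _), Real.sqrt_sq (norm_nonneg _)]
    -- √((1-r²)(1-a²)) ≤ (1+ar)√(1-x²)
    have hsq : Real.sqrt (1 - r ^ 2) * Real.sqrt (1 - a ^ 2)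
        ≤ (1 + a * r) * Real.sqrt (1 - x ^ 2) := by
      have h1 := Real.sqrt_le_sqrt hkey
      rw [Real.sqrt_mul h1r2.le, Real.sqrt_mul (sq_nonneg _),
        Real.sqrt_sq (by nlinarith : (0:ℝ) ≤ 1 + a * r)] at h1
      exact h1
    rw [hM_def, le_div_iff₀ hDpos]
    calc ‖F z‖ * D
        = ‖F z‖ * ((1 - r ^ 2) * (Real.sqrt (1 - r ^ 2) * Real.sqrt (1 - a ^ 2))) := by
          rw [hD_def]; ring
      _ ≤ ‖F z‖ * ((1 - r ^ 2) * ((1 + a * r) * Real.sqrt (1 - x ^ 2))) := by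
          apply mul_le_mul_of_nonneg_left _ (norm_nonneg _)
          exact mul_le_mul_of_nonneg_left hsq h1r2.le
      _ = ((1 - r ^ 2) * (‖F z‖ * Real.sqrt (1 - x ^ 2))) * (1 + a * r) := by ring
      _ ≤ betaH h g * (1 + a * r) := by
          apply mul_le_mul_of_nonneg_right _ (by nlinarith)
          rw [← hsqrtjac]; exact hβz
  have hGM : ∀ z : ℂ, ‖z‖ = r → ‖G z‖ ≤ M := by
    intro z hzr
    refine le_trans (le_of_lt (hsp z ?_)) (hFM z hzr)
    rw [mem_ball_zero_iff, hzr]; exact hr1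
  -- Cauchy estimates
  obtain ⟨m, rfl⟩ : ∃ m, n = m + 1 := ⟨n - 1, by omega⟩
  have hsub : m + 1 - 1 = m := rfl
  have hclosed : closedBall (0:ℂ) r ⊆ ball 0 1 := closedBall_subset_ball hr1
  have cauchyF := cauchy_coeff_bound hr0 (hFd.mono hclosed) hFM m
  have cauchyG := cauchy_coeff_bound hr0 (hGd.mono hclosed) hGM m
  have hiterh : iteratedDeriv (m + 1) h 0 = iteratedDeriv m F 0 := by
    rw [iteratedDeriv_succ', hF_def]
  have hiterg : iteratedDeriv (m + 1) g 0 = iteratedDeriv m G 0 := by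
    rw [iteratedDeriv_succ', hG_def]
  -- numeric endgame
  have hM0 : 0 ≤ M := le_trans (norm_nonneg _) (hFM r (by simp [abs_of_pos hr0]))
  have habs_div : ∀ w : ℂ, ‖w / ((m+1).factorial : ℂ)‖
      = ‖w‖ / ((m+1).factorial : ℝ) := by
    intro w
    rw [norm_div]
    norm_num
  have hbound : ∀ w : ℂ, ‖w‖ ≤ m.factorial * M / r ^ m →
      ‖w / ((m+1).factorial : ℂ)‖ ≤ M / ((m + 1 : ℝ) * r ^ m) := by
    intro w hw
    rw [habs_div]
    rw [div_le_div_iff₀ (by positivity) (by positivity)]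
    calc ‖w‖ * ((m + 1 : ℝ) * r ^ m)
        ≤ (m.factorial * M / r ^ m) * ((m + 1 : ℝ) * r ^ m) := by
          apply mul_le_mul_of_nonneg_right hw (by positivity)
      _ = M * ((m+1).factorial : ℝ) := by
          field_simp [Nat.factorial_succ]
          rw [Nat.factorial_succ]; push_cast; ring
  have hfin : M / ((m + 1 : ℝ) * r ^ m)
      = betaH h g * (1 + a * r)
          / (((m:ℝ) + 1) * r ^ m * (1 - r ^ 2) ^ ((3 : ℝ) / 2)
              * Real.sqrt (1 - a ^ 2)) := by
    have h32 : (1 - r ^ 2) ^ ((3 : ℝ) / 2) = (1 - r ^ 2) * Real.sqrt (1 - r ^ 2) := by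
      rw [show (3:ℝ)/2 = 1 + 1/2 by norm_num, Real.rpow_add h1r2, Real.rpow_one,
        Real.sqrt_eq_rpow]
    rw [h32, hM_def, hD_def, div_div]
    congr 1
    push_cast
    ring
  rw [hsub]
  push_cast
  apply max_le
  · rw [hiterh]
    exact le_of_le_of_eq (hbound _ cauchyF) hfin
  · rw [hiterg]
    exact le_of_le_of_eq (hbound _ cauchyG) hfin
end

section
/- The real function φ(x) = ((x+2)/(x−1))^{(x−1)/2} · ((x+2)/x) is strictly increasing on [2, ∞) and tends to e^{3/2} as x → ∞; in particular φ(x) < e^{3/2} for all x ≥ 2. -/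
open Filter Real

-- auxiliary logarithm lower bound: log(1+t) ≥ 2t/(2+t) for t ≥ 0
lemma log_lower {t : ℝ} (ht : 0 ≤ t) : 2*t/(2+t) ≤ Real.log (1+t) := by
  set f : ℝ → ℝ := fun s => Real.log (1+s) - 2*s/(2+s) with hf
  have hder : ∀ s : ℝ, 0 < s → HasDerivAt f (1/(1+s) - (2*(2+s) - 2*s*1)/(2+s)^2) s := by
    intro s hs
    have h1 : HasDerivAt (fun s : ℝ => 1+s) 1 s := by
      simpa using (hasDerivAt_id s).const_add 1
    have h2 : HasDerivAt (fun s : ℝ => Real.log (1+s)) (1/(1+s)) s := by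
      simpa using h1.log (by linarith)
    have h3 : HasDerivAt (fun s : ℝ => 2*s) 2 s := by
      simpa using (hasDerivAt_id s).const_mul 2
    have h4 : HasDerivAt (fun s : ℝ => 2+s) 1 s := by
      simpa using (hasDerivAt_id s).const_add 2
    exact h2.sub (h3.div h4 (by linarith))
  have hmono : MonotoneOn f (Set.Ici 0) := by
    apply monotoneOn_of_deriv_nonneg (convex_Ici 0)
    · intro s hs
      simp only [Set.mem_Ici] at hs
      apply ContinuousWithinAt.sub
      · exact ((Real.continuousAt_log (by positivity)).comp
          (by fun_prop)).continuousWithinAt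
      · exact (ContinuousAt.div (by fun_prop) (by fun_prop) (by positivity)).continuousWithinAt
    · intro s hs
      rw [interior_Ici] at hs
      simp only [Set.mem_Ioi] at hs
      exact ((hder s hs).differentiableAt).differentiableWithinAt
    · intro s hs
      rw [interior_Ici] at hs
      simp only [Set.mem_Ioi] at hs
      rw [(hder s hs).deriv]
      have h1 : (0:ℝ) < 1 + s := by linarith
      have h2 : (0:ℝ) < 2 + s := by linarith
      rw [sub_nonneg, div_le_div_iff₀ (by positivity) h1]
      nlinarith [sq_nonneg s]
  have h0 : f 0 = 0 := by simp [hf]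
  have := hmono (Set.self_mem_Ici) ht ht
  rw [h0] at this
  simpa [hf, sub_nonneg] using this

noncomputable def gfun : ℝ → ℝ :=
  fun x => (x-1)/2 * (Real.log (x+2) - Real.log (x-1)) + (Real.log (x+2) - Real.log x)

lemma gfun_hasDeriv {x : ℝ} (hx : 1 < x) :
    HasDerivAt gfun
      (1/2 * (Real.log (x+2) - Real.log (x-1)) + (x-1)/2 * (1/(x+2) - 1/(x-1))
        + (1/(x+2) - 1/x)) x := by
  have hx2 : (0:ℝ) < x + 2 := by linarith
  have hx1 : (0:ℝ) < x - 1 := by linarith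
  have hx0 : (0:ℝ) < x := by linarith
  have h1 : HasDerivAt (fun x : ℝ => x+2) 1 x := by simpa using (hasDerivAt_id x).add_const 2
  have h2 : HasDerivAt (fun x : ℝ => x-1) 1 x := by simpa using (hasDerivAt_id x).sub_const 1
  have hl1 : HasDerivAt (fun x : ℝ => Real.log (x+2)) (1/(x+2)) x := by
    simpa using h1.log hx2.ne'
  have hl2 : HasDerivAt (fun x : ℝ => Real.log (x-1)) (1/(x-1)) x := by
    simpa using h2.log hx1.ne'
  have hl3 : HasDerivAt Real.log (1/x) x := by
    simpa [one_div] using Real.hasDerivAt_log hx0.ne'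
  have hq : HasDerivAt (fun x : ℝ => (x-1)/2) (1/2) x := by
    simpa using h2.div_const 2
  exact (hq.mul (hl1.sub hl2)).add (hl1.sub hl3)

lemma gfun_deriv_pos {x : ℝ} (hx : 2 ≤ x) :
    0 < 1/2 * (Real.log (x+2) - Real.log (x-1)) + (x-1)/2 * (1/(x+2) - 1/(x-1))
        + (1/(x+2) - 1/x) := by
  have hx2 : (0:ℝ) < x + 2 := by linarith
  have hx1 : (0:ℝ) < x - 1 := by linarith
  have hx0 : (0:ℝ) < x := by linarith
  have hxm : (0:ℝ) < x + 1/2 := by linarith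
  have hd1 : (0:ℝ) < 4*x + 5 := by linarith
  have hd2 : (0:ℝ) < 4*x - 1 := by linarith
  have hd3 : (0:ℝ) < 2*x + 1 := by linarith
  have hd4 : (0:ℝ) < 2*x - 2 := by linarith
  -- piece 1: log(x+2) - log(x+1/2) ≥ 6/(4x+5)
  have p1 : 6/(4*x+5) ≤ Real.log (x+2) - Real.log (x+1/2) := by
    have ht : (0:ℝ) ≤ 3/(2*x+1) := by positivity
    have := log_lower ht
    have e1 : (1:ℝ) + 3/(2*x+1) = (x+2)/(x+1/2) := by field_simp; ring
    have hne : (2:ℝ) + 3/(2*x+1) ≠ 0 := by positivity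
    have e2 : 2*(3/(2*x+1))/(2+3/(2*x+1)) = 6/(4*x+5) := by
      rw [div_eq_div_iff (by positivity) hd1.ne']
      field_simp
      ring
    rw [e1, e2, Real.log_div hx2.ne' hxm.ne'] at this
    exact this
  -- piece 2: log(x+1/2) - log(x-1) ≥ 6/(4x-1)
  have p2 : 6/(4*x-1) ≤ Real.log (x+1/2) - Real.log (x-1) := by
    have ht : (0:ℝ) ≤ 3/(2*x-2) := by positivity
    have := log_lower ht
    have e1 : (1:ℝ) + 3/(2*x-2) = (x+1/2)/(x-1) := by
      field_simp
      ring
    have hne : (2:ℝ) + 3/(2*x-2) ≠ 0 := by positivity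
    have e2 : 2*(3/(2*x-2))/(2+3/(2*x-2)) = 6/(4*x-1) := by
      rw [div_eq_div_iff (by positivity) hd2.ne']
      field_simp
      ring
    rw [e1, e2, Real.log_div hxm.ne' hx1.ne'] at this
    exact this
  have hL : 6/(4*x+5) + 6/(4*x-1) ≤ Real.log (x+2) - Real.log (x-1) := by linarith
  -- rational inequality
  have hrat : 0 < 1/2 * (6/(4*x+5) + 6/(4*x-1)) + (x-1)/2 * (1/(x+2) - 1/(x-1))
      + (1/(x+2) - 1/x) := by
    have key : 1/2 * (6/(4*x+5) + 6/(4*x-1)) + (x-1)/2 * (1/(x+2) - 1/(x-1))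
        + (1/(x+2) - 1/x)
        = (8*x^2 - x + 20) / (2*x*(x+2)*(4*x+5)*(4*x-1)) := by
      field_simp
      ring
    rw [key]
    apply div_pos (by nlinarith) (by positivity)
  nlinarith [hL]

lemma phi_eq {x : ℝ} (hx : 1 < x) :
    ((x + 2) / (x - 1)) ^ ((x - 1) / 2) * ((x + 2) / x) = Real.exp (gfun x) := by
  have hx2 : (0:ℝ) < x + 2 := by linarith
  have hx1 : (0:ℝ) < x - 1 := by linarith
  have hx0 : (0:ℝ) < x := by linarith
  have hb : (0:ℝ) < (x+2)/(x-1) := by positivity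
  have hq : (0:ℝ) < (x+2)/x := by positivity
  rw [Real.rpow_def_of_pos hb]
  rw [← Real.exp_log hq]
  rw [← Real.exp_add]
  congr 1
  rw [Real.log_div hx2.ne' hx1.ne', Real.log_div hx2.ne' hx0.ne']
  unfold gfun
  ring

lemma gfun_strictMono : StrictMonoOn gfun (Set.Ici 2) := by
  apply strictMonoOn_of_deriv_pos (convex_Ici 2)
  · intro x hx
    simp only [Set.mem_Ici] at hx
    exact ((gfun_hasDeriv (by linarith)).continuousAt).continuousWithinAt
  · intro x hx
    rw [interior_Ici] at hx
    simp only [Set.mem_Ioi] at hx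
    rw [(gfun_hasDeriv (by linarith)).deriv]
    exact gfun_deriv_pos (le_of_lt hx)

/-- **The auxiliary function in the coefficient estimate.**  The function
`φ(x) = ((x+2)/(x-1))^{(x-1)/2}·((x+2)/x)` is strictly increasing on `[2, ∞)`, tends to
`e^{3/2}` as `x → ∞`, and satisfies `φ(x) < e^{3/2}` for all `x ≥ 2`. -/
theorem phi_increasing_to_exp_three_halves (φ : ℝ → ℝ)
    (hφ : ∀ x : ℝ, φ x = ((x + 2) / (x - 1)) ^ ((x - 1) / 2) * ((x + 2) / x)) :
    StrictMonoOn φ (Set.Ici 2)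
    ∧ Filter.Tendsto φ Filter.atTop (nhds (Real.exp (3 / 2)))
    ∧ ∀ x : ℝ, 2 ≤ x → φ x < Real.exp (3 / 2) := by
  have hmono : StrictMonoOn φ (Set.Ici 2) := by
    intro a ha b hb hab
    simp only [Set.mem_Ici] at ha hb
    rw [hφ a, hφ b, phi_eq (by linarith : (1:ℝ) < a), phi_eq (by linarith : (1:ℝ) < b)]
    exact Real.exp_lt_exp.2 (gfun_strictMono ha hb hab)
  have htend : Filter.Tendsto φ Filter.atTop (nhds (Real.exp (3 / 2))) := by
    have h2 : Tendsto (fun x : ℝ => (x - 1) / 2) atTop atTop := by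
      apply Tendsto.atTop_div_const (by norm_num)
      exact tendsto_atTop_add_const_right _ (-1) tendsto_id
    have h3 : Tendsto (fun x : ℝ => (1 + (3/2) / ((x-1)/2)) ^ ((x-1)/2))
        atTop (nhds (Real.exp (3/2))) :=
      (Real.tendsto_one_add_div_rpow_exp (3/2)).comp h2
    have h4 : Tendsto (fun x : ℝ => (x + 2) / x) atTop (nhds 1) := by
      have : Tendsto (fun x : ℝ => 1 + 2 / x) atTop (nhds (1 + 0)) :=
        tendsto_const_nhds.add (tendsto_const_nhds.div_atTop tendsto_id)
      rw [add_zero] at this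
      apply this.congr'
      filter_upwards [eventually_gt_atTop (0:ℝ)] with x hx
      field_simp
    have h5 := h3.mul h4
    rw [mul_one] at h5
    apply h5.congr'
    filter_upwards [eventually_gt_atTop (1:ℝ)] with x hx
    rw [hφ x]
    congr 2
    have hx1 : (0:ℝ) < x - 1 := by linarith
    field_simp
    ring
  refine ⟨hmono, htend, fun x hx => ?_⟩
  have hx1 : x ∈ Set.Ici (2:ℝ) := hx
  have hx2 : x + 1 ∈ Set.Ici (2:ℝ) := by simp only [Set.mem_Ici]; linarith
  have h1 : φ x < φ (x + 1) := hmono hx1 hx2 (lt_add_one x)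
  have h2 : φ (x + 1) ≤ Real.exp (3/2) := by
    apply ge_of_tendsto htend
    filter_upwards [eventually_ge_atTop (x+1)] with y hy
    exact hmono.monotoneOn hx2 (by simp only [Set.mem_Ici]; linarith) hy
  linarith
end
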